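/- arXiv:math/0605503 — 4 statements merged into one kernel-verified Lean document; each statement's English description precedes it below -/
import Mathlib

section
/- For any family F of arcs on a circle, the chromatic number of the circular arc graph of F satisfies χ(F) ≤ r_sup + r_inf. -/
open SimpleGraph
open scoped Classical

instance : Fact ((0:ℝ) < 1) := ⟨one_pos⟩

/-- An arc on the unit circle `AddCircle 1`, described by its left endpoint (the first
endpoint met anticlockwise from an interior point) and its (clockwise) length.
Since `0 < len < 1`, an arc is neither a single point nor the whole circle. -/
structure CArc where
  left : AddCircle (1:ℝ)
  len : ℝ
  len_pos : 0 < len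
  len_lt_one : len < 1

namespace CArc

/-- The set of points of the arc: going clockwise from the left endpoint for `len`. -/
def pts (a : CArc) : Set (AddCircle (1:ℝ)) :=
  {q | ∃ t : ℝ, 0 ≤ t ∧ t ≤ a.len ∧ q = a.left + (t : AddCircle (1:ℝ))}

/-- The right endpoint of an arc. -/
noncomputable def right (a : CArc) : AddCircle (1:ℝ) := a.left + ((a.len : ℝ) : AddCircle (1:ℝ))

end CArc

/-- A family of arcs on the circle: a finite set of arcs with all endpoints distinct. -/
structure ArcFamily where
  arcs : Finset CArc
  endpoints_distinct :
    ∀ a ∈ arcs, ∀ b ∈ arcs, a ≠ b →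
      a.left ≠ b.left ∧ a.left ≠ b.right ∧ a.right ≠ b.left ∧ a.right ≠ b.right

namespace ArcFamily

/-- A family of arcs is proper if no arc is properly contained in another. -/
def IsProper (F : ArcFamily) : Prop :=
  ∀ a ∈ F.arcs, ∀ b ∈ F.arcs, ¬ a.pts ⊂ b.pts

/-- The overlap set of a point `p`: all arcs of the family containing `p`. -/
noncomputable def overlap (F : ArcFamily) (p : AddCircle (1:ℝ)) : Finset CArc :=
  F.arcs.filter fun a => p ∈ a.pts

/-- `r_sup`: the maximum cardinality of an overlap set. -/
noncomputable def rsup (F : ArcFamily) : ℕ :=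
  sSup {n | ∃ p, (F.overlap p).card = n}

/-- `r_inf`: the minimum cardinality of an overlap set. -/
noncomputable def rinf (F : ArcFamily) : ℕ :=
  sInf {n | ∃ p, (F.overlap p).card = n}

/-- The circular arc graph of a family: vertices are the arcs, two distinct arcs are
adjacent iff they intersect. -/
def graph (F : ArcFamily) : SimpleGraph {a : CArc // a ∈ F.arcs} where
  Adj u v := u ≠ v ∧ (u.1.pts ∩ v.1.pts).Nonempty
  symm := ⟨by rintro u v ⟨h, q, h1, h2⟩; exact ⟨h.symm, q, h2, h1⟩⟩
  loopless := ⟨by rintro u ⟨h, -⟩; exact h rfl⟩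

/-- `F.CwAdj u v` : the arc `v` is clockwise adjacent to the arc `u`,
i.e. `v ≠ u` and `v ∈ O(r(u))`. -/
def CwAdj (F : ArcFamily) (u v : CArc) : Prop :=
  v ≠ u ∧ v ∈ F.overlap u.right

/-- `F.AcwAdj u v` : the arc `v` is anticlockwise adjacent to the arc `u`,
i.e. `v ≠ u` and `v ∈ O(l(u))`. -/
def AcwAdj (F : ArcFamily) (u v : CArc) : Prop :=
  v ≠ u ∧ v ∈ F.overlap u.left

end ArcFamily

/-- `G` has a complete minor on `m` vertices: there are `m` pairwise disjoint connected
branch sets with an edge of `G` between any two of them. -/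
def HasKMinor {V : Type*} (G : SimpleGraph V) (m : ℕ) : Prop :=
  ∃ B : Fin m → Set V,
    (∀ i, (G.induce (B i)).Connected) ∧
    (Pairwise fun i j => Disjoint (B i) (B j)) ∧
    (Pairwise fun i j => ∃ u ∈ B i, ∃ v ∈ B j, G.Adj u v)

/-- A graph is a proper circular arc graph if it is isomorphic to the circular arc graph
of some proper family of arcs. -/
def IsProperCircularArcGraph {V : Type*} (G : SimpleGraph V) : Prop :=
  ∃ F : ArcFamily, F.IsProper ∧ Nonempty (G ≃g F.graph)

/-- The clockwise angular distance from `p` to `q`: the unique `t ∈ [0,1)`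
with `q = p + t`.  Points are "encountered" in clockwise order of this quantity
when traversing clockwise from `p`. -/
noncomputable def angFrom (p q : AddCircle (1:ℝ)) : ℝ :=
  ((AddCircle.equivIco (1:ℝ) 0) (q - p) : ℝ)


section Aux

namespace CircChrome

lemma angFrom_mem (p q : AddCircle (1:ℝ)) : angFrom p q ∈ Set.Ico (0:ℝ) 1 := by
  have h := ((AddCircle.equivIco (1:ℝ) 0) (q - p)).2
  simpa [angFrom] using h

lemma coe_angFrom (p q : AddCircle (1:ℝ)) : ((angFrom p q : ℝ) : AddCircle (1:ℝ)) = q - p :=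
  (AddCircle.equivIco (1:ℝ) 0).symm_apply_apply (q - p)

lemma eq_add_angFrom (p q : AddCircle (1:ℝ)) : q = p + ((angFrom p q : ℝ) : AddCircle (1:ℝ)) := by
  rw [coe_angFrom]; abel

lemma angFrom_add (p : AddCircle (1:ℝ)) {s : ℝ} (hs : s ∈ Set.Ico (0:ℝ) 1) :
    angFrom p (p + (s : AddCircle (1:ℝ))) = s := by
  have h1 : ((angFrom p (p + (s : AddCircle (1:ℝ))) : ℝ) : AddCircle (1:ℝ))
      = (s : AddCircle (1:ℝ)) := by
    rw [coe_angFrom]; abel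
  have h2 := angFrom_mem p (p + (s : AddCircle (1:ℝ)))
  exact (AddCircle.coe_eq_coe_iff_of_mem_Ico (a := (0:ℝ))
    (by simpa using h2) (by simpa using hs)).mp h1

lemma angFrom_inj (p : AddCircle (1:ℝ)) {q q' : AddCircle (1:ℝ)}
    (h : angFrom p q = angFrom p q') : q = q' := by
  rw [eq_add_angFrom p q, eq_add_angFrom p q', h]

lemma left_mem_pts (a : CArc) : a.left ∈ a.pts :=
  ⟨0, le_refl 0, le_of_lt a.len_pos, by simp⟩

lemma arc_len_lt (a : CArc) (p : AddCircle (1:ℝ)) (hp : p ∉ a.pts) :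
    angFrom p a.left + a.len < 1 := by
  by_contra h
  push_neg at h
  have hL := angFrom_mem p a.left
  refine hp ⟨1 - angFrom p a.left, by linarith [hL.2], by linarith, ?_⟩
  have e1 := eq_add_angFrom p a.left
  have e3 : a.left + ((1 - angFrom p a.left : ℝ) : AddCircle (1:ℝ))
      = p + ((angFrom p a.left : ℝ) : AddCircle (1:ℝ))
        + ((1 - angFrom p a.left : ℝ) : AddCircle (1:ℝ)) := by
    rw [← e1]
  rw [e3, add_assoc, ← AddCircle.coe_add]
  have e2 : angFrom p a.left + (1 - angFrom p a.left) = 1 := by ring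
  rw [e2, AddCircle.coe_period, add_zero]

lemma mem_pts_iff (a : CArc) (p : AddCircle (1:ℝ)) (hp : p ∉ a.pts) (q : AddCircle (1:ℝ)) :
    q ∈ a.pts ↔ angFrom p a.left ≤ angFrom p q ∧ angFrom p q ≤ angFrom p a.left + a.len := by
  have hlen := arc_len_lt a p hp
  have hL := angFrom_mem p a.left
  constructor
  · rintro ⟨t, ht0, htl, rfl⟩
    have key : angFrom p (a.left + ((t : ℝ) : AddCircle (1:ℝ)))
        = angFrom p a.left + t := by
      have e3 : a.left + ((t : ℝ) : AddCircle (1:ℝ))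
          = p + ((angFrom p a.left + t : ℝ) : AddCircle (1:ℝ)) := by
        conv_lhs => rw [eq_add_angFrom p a.left]
        rw [add_assoc, ← AddCircle.coe_add]
      rw [e3, angFrom_add p ⟨by linarith [hL.1], by linarith⟩]
    rw [key]
    exact ⟨by linarith, by linarith⟩
  · rintro ⟨h1, h2⟩
    refine ⟨angFrom p q - angFrom p a.left, by linarith, by linarith, ?_⟩
    have e3 : a.left + ((angFrom p q - angFrom p a.left : ℝ) : AddCircle (1:ℝ))
        = p + ((angFrom p a.left + (angFrom p q - angFrom p a.left) : ℝ) : AddCircle (1:ℝ)) := by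
      nth_rewrite 1 [eq_add_angFrom p a.left]
      rw [add_assoc, ← AddCircle.coe_add]
    rw [e3]
    have e2 : angFrom p a.left + (angFrom p q - angFrom p a.left) = angFrom p q := by ring
    rw [e2, ← eq_add_angFrom]

noncomputable def rnk (S : Finset CArc) (L : CArc → ℝ) (a : CArc) : ℕ :=
  (S.filter (fun b => L b < L a)).card

lemma rnk_lt {S : Finset CArc} {L : CArc → ℝ} {a b : CArc} (hb : b ∈ S) (h : L b < L a) :
    rnk S L b < rnk S L a := by
  apply Finset.card_lt_card
  constructor
  · intro c hc
    rw [Finset.mem_filter] at hc ⊢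
    exact ⟨hc.1, hc.2.trans h⟩
  · intro hsub
    have h1 : b ∈ S.filter (fun c => L c < L a) := Finset.mem_filter.mpr ⟨hb, h⟩
    have h2 := hsub h1
    rw [Finset.mem_filter] at h2
    exact lt_irrefl _ h2.2

noncomputable def greedy (S : Finset CArc) (L R : CArc → ℝ) (a : CArc) : ℕ :=
  sInf {c : ℕ | c ∉ ((S.filter (fun b => L b < L a ∧ L a ≤ R b)).attach.image
    (fun b => greedy S L R b.1))}
termination_by rnk S L a
decreasing_by
  have hb := b.2
  rw [Finset.mem_filter] at hb
  exact rnk_lt hb.1 hb.2.1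

lemma greedy_mem (S : Finset CArc) (L R : CArc → ℝ) (a : CArc) :
    greedy S L R a ∉ ((S.filter (fun b => L b < L a ∧ L a ≤ R b)).attach.image
      (fun b => greedy S L R b.1)) := by
  rw [greedy]
  set T := (S.filter (fun b => L b < L a ∧ L a ≤ R b)).attach.image
    (fun b => greedy S L R b.1) with hT
  obtain ⟨c, hc⟩ := Infinite.exists_notMem_finset T
  have h := Nat.sInf_mem (s := {c : ℕ | c ∉ T}) ⟨c, hc⟩
  exact h

lemma greedy_ne {S : Finset CArc} {L R : CArc → ℝ} {a b : CArc}
    (hb : b ∈ S) (h1 : L b < L a) (h2 : L a ≤ R b) :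
    greedy S L R a ≠ greedy S L R b := by
  intro h
  apply greedy_mem S L R a
  rw [h]
  exact Finset.mem_image.mpr ⟨⟨b, Finset.mem_filter.mpr ⟨hb, h1, h2⟩⟩,
    Finset.mem_attach _ _, rfl⟩

lemma sInf_not_mem_le_card (T : Finset ℕ) : sInf {c : ℕ | c ∉ T} ≤ T.card := by
  by_contra h
  push_neg at h
  have hsub : Finset.range (T.card + 1) ⊆ T := by
    intro c hc
    rw [Finset.mem_range] at hc
    by_contra hcT
    exact absurd (Nat.sInf_le (show c ∈ {c : ℕ | c ∉ T} from hcT)) (by omega)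
  have := Finset.card_le_card hsub
  simp at this

lemma greedy_le (S : Finset CArc) (L R : CArc → ℝ) (a : CArc) :
    greedy S L R a ≤ (S.filter (fun b => L b < L a ∧ L a ≤ R b)).card := by
  rw [greedy]
  calc sInf _ ≤ ((S.filter (fun b => L b < L a ∧ L a ≤ R b)).attach.image
        (fun b => greedy S L R b.1)).card := sInf_not_mem_le_card _
    _ ≤ (S.filter (fun b => L b < L a ∧ L a ≤ R b)).attach.card := Finset.card_image_le
    _ = _ := Finset.card_attach

end CircChrome

end Aux

/-- For any family `F` of arcs, `χ(F) ≤ r_sup + r_inf`. -/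
theorem chromatic_le_rsup_add_rinf (F : ArcFamily) :
    F.graph.chromaticNumber ≤ ((F.rsup + F.rinf : ℕ) : ℕ∞) := by
  classical
  open CircChrome in
  rw [SimpleGraph.chromaticNumber_le_iff_colorable]
  -- choose a point realizing rinf
  have hne : {n | ∃ p, (F.overlap p).card = n}.Nonempty := ⟨(F.overlap 0).card, 0, rfl⟩
  obtain ⟨p, hp⟩ : ∃ p, (F.overlap p).card = F.rinf := by
    have h := Nat.sInf_mem hne
    exact h
  have hsup : ∀ q, (F.overlap q).card ≤ F.rsup := by
    intro q
    refine le_csSup ⟨F.arcs.card, ?_⟩ ⟨q, rfl⟩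
    rintro n ⟨r, rfl⟩
    exact Finset.card_filter_le _ _
  set S : Finset CArc := F.arcs.filter (fun a => p ∉ a.pts) with hS
  set L : CArc → ℝ := fun a => angFrom p a.left with hLdef
  set R : CArc → ℝ := fun a => angFrom p a.left + a.len with hRdef
  -- facts about S members
  have hSmem : ∀ a ∈ S, a ∈ F.arcs ∧ p ∉ a.pts := by
    intro a ha
    rw [hS, Finset.mem_filter] at ha
    exact ha
  -- greedy colors are < rsup on S
  have hg_lt : ∀ a ∈ S, greedy S L R a < F.rsup := by
    intro a ha
    obtain ⟨haF, hap⟩ := hSmem a ha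
    have hNsub : S.filter (fun b => L b < L a ∧ L a ≤ R b) ⊆ (F.overlap a.left).erase a := by
      intro b hb
      rw [Finset.mem_filter] at hb
      obtain ⟨hbS, hb1, hb2⟩ := hb
      obtain ⟨hbF, hbp⟩ := hSmem b hbS
      have hmem : a.left ∈ b.pts := by
        rw [mem_pts_iff b p hbp a.left]
        exact ⟨le_of_lt hb1, hb2⟩
      refine Finset.mem_erase.mpr ⟨?_, Finset.mem_filter.mpr ⟨hbF, hmem⟩⟩
      intro hba
      rw [hba] at hb1
      exact lt_irrefl _ hb1
    have haO : a ∈ F.overlap a.left := Finset.mem_filter.mpr ⟨haF, left_mem_pts a⟩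
    have hcard1 : 1 ≤ (F.overlap a.left).card := Finset.card_pos.mpr ⟨a, haO⟩
    have hcard2 : ((F.overlap a.left).erase a).card = (F.overlap a.left).card - 1 :=
      Finset.card_erase_of_mem haO
    have h3 := greedy_le S L R a
    have h4 := Finset.card_le_card hNsub
    have h5 := hsup a.left
    omega
  -- the coloring function
  have hcol : ∀ a : {a : CArc // a ∈ F.arcs}, a.1 ∉ F.overlap p → a.1 ∈ S := by
    intro a h
    rw [hS, Finset.mem_filter]
    refine ⟨a.2, fun hmem => h ?_⟩
    exact Finset.mem_filter.mpr ⟨a.2, hmem⟩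
  let e : {x // x ∈ F.overlap p} ≃ Fin F.rinf := (F.overlap p).equivFinOfCardEq hp
  let c : {a : CArc // a ∈ F.arcs} → Fin (F.rsup + F.rinf) := fun a =>
    if h : a.1 ∈ F.overlap p then
      ⟨F.rsup + (e ⟨a.1, h⟩).1, by have := (e ⟨a.1, h⟩).isLt; omega⟩
    else
      ⟨greedy S L R a.1, lt_of_lt_of_le (hg_lt a.1 (hcol a h)) (Nat.le_add_right _ _)⟩
  refine ⟨SimpleGraph.Coloring.mk c ?_⟩
  rintro u v ⟨huv, q, hqu, hqv⟩
  have huv1 : u.1 ≠ v.1 := fun h => huv (Subtype.ext h)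
  intro hc
  by_cases hu : u.1 ∈ F.overlap p <;> by_cases hv : v.1 ∈ F.overlap p
  · -- both contain p : colors rsup + e distinct
    simp only [c, dif_pos hu, dif_pos hv, Fin.mk.injEq] at hc
    have : (⟨u.1, hu⟩ : {x // x ∈ F.overlap p}) = ⟨v.1, hv⟩ :=
      e.injective (Fin.ext (by omega))
    exact huv1 (Subtype.mk_eq_mk.mp this)
  · simp only [c, dif_pos hu, dif_neg hv, Fin.mk.injEq] at hc
    have := hg_lt v.1 (hcol v hv)
    omega
  · simp only [c, dif_neg hu, dif_pos hv, Fin.mk.injEq] at hc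
    have := hg_lt u.1 (hcol u hu)
    omega
  · -- both avoid p : greedy colors distinct
    simp only [c, dif_neg hu, dif_neg hv, Fin.mk.injEq] at hc
    have huS := hcol u hu
    have hvS := hcol v hv
    obtain ⟨huF, hup⟩ := hSmem u.1 huS
    obtain ⟨hvF, hvp⟩ := hSmem v.1 hvS
    have hqu' := (mem_pts_iff u.1 p hup q).mp hqu
    have hqv' := (mem_pts_iff v.1 p hvp q).mp hqv
    have hLne : L u.1 ≠ L v.1 := by
      intro h
      exact ((F.endpoints_distinct u.1 huF v.1 hvF huv1).1) (angFrom_inj p h)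
    rcases lt_or_gt_of_ne hLne with h | h
    · exact greedy_ne huS h (by simp only [hLdef, hRdef] at *; linarith) hc.symm
    · exact greedy_ne hvS h (by simp only [hLdef, hRdef] at *; linarith) hc
end

section
/- Let 𝒢 be a proper circular arc graph on the minimum possible number n of vertices that is a counterexample to Hadwiger's conjecture, with a fixed proper circular arc representation; let O be a maximum overlap set of the representation, r = |O| and x = χ(𝒢) − r. Then the minimum degree of 𝒢 satisfies δ(𝒢) ≥ r + x − 1. -/
open SimpleGraph
open scoped Classical

/-- A minimum counterexample to Hadwiger's conjecture among proper circular arc graphs: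
a proper family of arcs whose circular arc graph `𝒢` has no complete minor on `χ(𝒢)`
vertices, while every proper circular arc graph on fewer vertices than `𝒢` has a
complete minor on its own chromatic number of vertices. -/
structure MinCounterexample where
  F : ArcFamily
  proper : F.IsProper
  no_clique_minor : ∀ m : ℕ, F.graph.chromaticNumber = m → ¬ HasKMinor F.graph m
  minimal : ∀ (V : Type) [inst : Fintype V] (G : SimpleGraph V),
    IsProperCircularArcGraph G → Fintype.card V < F.arcs.card →
    ∀ m : ℕ, G.chromaticNumber = m → HasKMinor G m

/-- For the minimum counterexample `𝒢`, with `O` a maximum overlap set,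
`r = |O|` and `x = χ(𝒢) − r`, the minimum degree satisfies `δ(𝒢) ≥ r + x − 1`. -/
theorem min_counterexample_min_degree (C : MinCounterexample)
    (p₀ : AddCircle (1:ℝ)) (hmax : (C.F.overlap p₀).card = C.F.rsup)
    (r x : ℕ) (hr : (C.F.overlap p₀).card = r)
    (hx : C.F.graph.chromaticNumber = ((r + x : ℕ) : ℕ∞)) :
    ∀ v : {a : CArc // a ∈ C.F.arcs}, r + x - 1 ≤ (C.F.graph.neighborSet v).ncard := by
  intro v
  by_contra hcon
  push_neg at hcon
  set n := r + x with hn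
  have hncard : (C.F.graph.neighborSet v).ncard = (C.F.graph.neighborFinset v).card := by
    rw [SimpleGraph.neighborFinset_def, Set.ncard_eq_toFinset_card']
  rw [hncard] at hcon
  have hn2 : 2 ≤ n := by omega
  -- the family with the arc v removed
  set S : Finset CArc := C.F.arcs.erase v.1 with hS
  have hSsub : ∀ {a : CArc}, a ∈ S → a ∈ C.F.arcs := fun h => Finset.mem_of_mem_erase h
  let F' : ArcFamily :=
    ⟨S, fun a ha b hb hab =>
      C.F.endpoints_distinct a (hSsub ha) b (hSsub hb) hab⟩
  have hproper : F'.IsProper := fun a ha b hb => C.proper a (hSsub ha) b (hSsub hb)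
  -- the vertex inclusion
  let ιv : {a : CArc // a ∈ S} → {a : CArc // a ∈ C.F.arcs} :=
    fun a => ⟨a.1, hSsub a.2⟩
  have hinj : Function.Injective ιv := fun a b h =>
    Subtype.ext (congrArg (fun z : {a : CArc // a ∈ C.F.arcs} => z.1) h)
  have hadj : ∀ a b : {c : CArc // c ∈ S},
      (F'.graph.Adj a b ↔ C.F.graph.Adj (ιv a) (ιv b)) := by
    intro a b
    constructor
    · rintro ⟨hne, hint⟩
      exact ⟨fun h => hne (hinj h), hint⟩
    · rintro ⟨hne, hint⟩
      exact ⟨fun h => hne (congrArg ιv h), hint⟩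
  have ι : F'.graph ↪g C.F.graph :=
    ⟨⟨ιv, hinj⟩, fun {a b} => (hadj a b).symm⟩
  -- G is colorable with n colors
  have hcol : C.F.graph.Colorable n := by
    rw [← SimpleGraph.chromaticNumber_le_iff_colorable, hx]
  have hcol' : F'.graph.Colorable n := Colorable.of_hom ι.toHom hcol
  -- F' is not (n-1)-colorable
  have hnotcol : ¬ F'.graph.Colorable (n - 1) := by
    rintro ⟨c⟩
    -- extend the coloring to v
    have hmem : ∀ {u : {a : CArc // a ∈ C.F.arcs}}, u ≠ v → u.1 ∈ S := fun {u} hu =>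
      Finset.mem_erase.mpr ⟨fun h => hu (Subtype.ext h), u.2⟩
    set T : Finset (Fin (n - 1)) :=
      (C.F.graph.neighborFinset v).attach.image
        (fun u => c ⟨u.1.1, hmem (C.F.graph.ne_of_adj
          ((C.F.graph.mem_neighborFinset v u.1).mp u.2)).symm⟩) with hT
    have hTcard : T.card < n - 1 := by
      calc T.card ≤ (C.F.graph.neighborFinset v).attach.card := Finset.card_image_le
        _ = (C.F.graph.neighborFinset v).card := Finset.card_attach
        _ < n - 1 := hcon
    obtain ⟨c₀, hc₀⟩ : ∃ c₀ : Fin (n - 1), c₀ ∉ T := by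
      by_contra h
      push_neg at h
      have : T = Finset.univ := Finset.eq_univ_iff_forall.mpr h
      rw [this, Finset.card_univ, Fintype.card_fin] at hTcard
      omega
    have hmemT : ∀ (u : {a : CArc // a ∈ C.F.arcs}) (h : C.F.graph.Adj v u),
        c ⟨u.1, hmem (C.F.graph.ne_of_adj h).symm⟩ ∈ T := by
      intro u h
      exact Finset.mem_image.mpr
        ⟨⟨u, (C.F.graph.mem_neighborFinset v u).mpr h⟩, Finset.mem_attach _ _, rfl⟩
    set g : {a : CArc // a ∈ C.F.arcs} → Fin (n - 1) :=
      fun u => if h : u = v then c₀ else c ⟨u.1, hmem h⟩ with hgdef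
    have hgv : g v = c₀ := dif_pos rfl
    have hgu : ∀ (u : {a : CArc // a ∈ C.F.arcs}) (h : ¬ u = v),
        g u = c ⟨u.1, hmem h⟩ := fun u h => dif_neg h
    have cnew : C.F.graph.Coloring (Fin (n - 1)) := by
      refine SimpleGraph.Coloring.mk g ?_
      intro a b hab
      by_cases ha : a = v <;> by_cases hb : b = v
      · exact absurd (ha.trans hb.symm) (C.F.graph.ne_of_adj hab)
      · rw [ha, hgv, hgu b hb]
        intro h
        exact hc₀ (by rw [h]; exact hmemT b (ha ▸ hab))
      · rw [hb, hgv, hgu a ha]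
        intro h
        exact hc₀ (by rw [← h]; exact hmemT a (hb ▸ hab.symm))
      · rw [hgu a ha, hgu b hb]
        have : F'.graph.Adj ⟨a.1, hmem ha⟩ ⟨b.1, hmem hb⟩ := by
          rw [hadj]
          exact hab
        exact c.valid this
    have hc1 : C.F.graph.Colorable (n - 1) := ⟨cnew⟩
    have : C.F.graph.chromaticNumber ≤ ((n - 1 : ℕ) : ℕ∞) :=
      hc1.chromaticNumber_le
    rw [hx, Nat.cast_le] at this
    omega
  -- chromatic number of F' equals n
  have hχ' : F'.graph.chromaticNumber = (n : ℕ∞) := by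
    have hmemn : n ∈ {n' | F'.graph.Colorable n'} := hcol'
    have hsle : sInf {n' | F'.graph.Colorable n'} ≤ n := Nat.sInf_le hmemn
    have hscol : F'.graph.Colorable (sInf {n' | F'.graph.Colorable n'}) :=
      Nat.sInf_mem ⟨n, hmemn⟩
    have heq : sInf {n' | F'.graph.Colorable n'} = n := by
      rcases lt_or_eq_of_le hsle with hlt | heq
      · exact absurd (hscol.mono (by omega)) hnotcol
      · exact heq
    rw [hcol'.chromaticNumber_eq_sInf, heq]
  -- by minimality, F'.graph has a K_n minor
  have hcard : Fintype.card {a : CArc // a ∈ S} < C.F.arcs.card := by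
    rw [Fintype.card_coe, hS, Finset.card_erase_of_mem v.2]
    have : 0 < C.F.arcs.card := Finset.card_pos.mpr ⟨v.1, v.2⟩
    omega
  have hminor : HasKMinor F'.graph n :=
    C.minimal {a : CArc // a ∈ S} F'.graph ⟨F', hproper, ⟨SimpleGraph.Iso.refl (G := F'.graph)⟩⟩
      hcard n hχ'
  -- lift the minor to C.F.graph
  obtain ⟨B, hB1, hB2, hB3⟩ := hminor
  have : HasKMinor C.F.graph n := by
    refine ⟨fun i => ιv '' B i, ?_, ?_, ?_⟩
    · intro i
      have e : F'.graph.induce (B i) ≃g C.F.graph.induce (ιv '' B i) := by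
        refine ⟨Equiv.Set.image ιv (B i) hinj, ?_⟩
        intro a b
        simp only [SimpleGraph.comap_adj, Equiv.Set.image_apply]
        exact (hadj a.1 b.1).symm
      exact e.connected_iff.mp (hB1 i)
    · intro i j hij
      exact (Set.disjoint_image_iff hinj).mpr (hB2 hij)
    · intro i j hij
      obtain ⟨u, hu, w, hw, huw⟩ := hB3 hij
      exact ⟨ιv u, Set.mem_image_of_mem _ hu, ιv w, Set.mem_image_of_mem _ hw,
        (hadj u w).mp huw⟩
  exact C.no_clique_minor n hx this
end

section
/- For a family F of proper arcs and any point p on the circle: when traversing the circle in the clockwise direction starting from p, the right endpoints of all arcs in the overlap set O(p) are encountered before the right endpoint of any arc of F not in O(p). -/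
open SimpleGraph
open scoped Classical

private lemma angFrom_add_eq (p : AddCircle (1:ℝ)) (x : ℝ) (h0 : 0 ≤ x) (h1 : x < 1) :
    angFrom p (p + (x : AddCircle (1:ℝ))) = x := by
  unfold angFrom
  have h2 : p + (x : AddCircle (1:ℝ)) - p = (x : AddCircle (1:ℝ)) := by abel
  rw [h2]
  have hx : x ∈ Set.Ico (0:ℝ) (0+1) := ⟨h0, by linarith⟩
  have : (AddCircle.equivIco (1:ℝ) 0) (x : AddCircle (1:ℝ)) = ⟨x, hx⟩ := by
    rw [Equiv.apply_eq_iff_eq_symm_apply]; rfl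
  rw [this]

/-- For a family of proper arcs and any point `p`: traversing the circle
clockwise from `p`, the right endpoints of all arcs in `O(p)` are encountered before the
right endpoint of any arc of `F` not in `O(p)`. -/
theorem overlap_right_endpoints_first (F : ArcFamily) (hF : F.IsProper)
    (p : AddCircle (1:ℝ)) (u : CArc) (hu : u ∈ F.overlap p)
    (v : CArc) (hv : v ∈ F.arcs) (hvp : v ∉ F.overlap p) :
    angFrom p u.right < angFrom p v.right := by
  obtain ⟨huF, t, ht0, ht1, hpt⟩ :
      u ∈ F.arcs ∧ ∃ t : ℝ, 0 ≤ t ∧ t ≤ u.len ∧ p = u.left + (t : AddCircle (1:ℝ)) :=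
    Finset.mem_filter.mp hu
  have hpv : p ∉ v.pts := fun h => hvp (Finset.mem_filter.mpr ⟨hv, h⟩)
  set s : ℝ := angFrom p v.right with hs
  have hs0 : 0 ≤ s := ((AddCircle.equivIco (1:ℝ) 0) (v.right - p)).2.1
  have hs1 : s < 1 := by
    have h : s < 0 + 1 := ((AddCircle.equivIco (1:ℝ) 0) (v.right - p)).2.2
    linarith
  have hvr : v.right = p + (s : AddCircle (1:ℝ)) := by
    have := (AddCircle.equivIco (1:ℝ) 0).symm_apply_apply (v.right - p)
    have h2 : ((s : ℝ) : AddCircle (1:ℝ)) = v.right - p := this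
    rw [h2]; abel
  -- p ∈ u.pts
  have hp_u : p ∈ u.pts := ⟨t, ht0, ht1, hpt⟩
  -- v.len < s
  have hvs : v.len < s := by
    by_contra h
    push_neg at h
    exact hpv ⟨v.len - s, by linarith, by linarith, by
      rw [AddCircle.coe_sub]
      have : v.left + ((v.len : ℝ) : AddCircle (1:ℝ)) = v.right := rfl
      rw [sub_eq_add_neg, ← add_assoc, this, hvr]; abel⟩
  -- angFrom p u.right = u.len - t
  have hur : u.right = p + (((u.len - t : ℝ)) : AddCircle (1:ℝ)) := by
    rw [hpt, AddCircle.coe_sub]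
    show u.left + ((u.len : ℝ) : AddCircle (1:ℝ)) = _
    abel
  have hau : angFrom p u.right = u.len - t := by
    rw [hur]
    exact angFrom_add_eq p _ (by linarith) (by linarith [u.len_lt_one])
  rw [hau]
  by_contra hcon
  push_neg at hcon
  -- s ≤ u.len - t ; show v.pts ⊆ u.pts
  have hsub : v.pts ⊆ u.pts := by
    rintro q ⟨t', ht'0, ht'1, hq⟩
    refine ⟨t + s - v.len + t', by linarith, by linarith, ?_⟩
    have hvl : v.left = p + (((s - v.len : ℝ)) : AddCircle (1:ℝ)) := by
      have : v.left + ((v.len : ℝ) : AddCircle (1:ℝ)) = v.right := rfl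
      rw [AddCircle.coe_sub]
      have h3 : v.left = v.right - ((v.len : ℝ) : AddCircle (1:ℝ)) := by
        rw [← this]; abel
      rw [h3, hvr]; abel
    rw [hq, hvl, hpt]
    rw [show (t + s - v.len + t' : ℝ) = t + ((s - v.len) + t') by abel]
    rw [AddCircle.coe_add, AddCircle.coe_add]
    abel
  have hss : v.pts ⊂ u.pts :=
    ⟨hsub, fun h => hpv (h hp_u)⟩
  exact hF v hv u huF hss
end

section
/- Let F be a family of proper arcs. If an arc u is clockwise adjacent to an arc v, then every arc w of F whose right endpoint is encountered after the right endpoint of v and before the right endpoint of u when traversing clockwise from r(v) is also clockwise adjacent to v. -/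
open SimpleGraph
open scoped Classical

-- helpers
lemma coe_equivIco_back (x : AddCircle (1:ℝ)) :
    (((AddCircle.equivIco (1:ℝ) 0) x : ℝ) : AddCircle (1:ℝ)) = x :=
  (AddCircle.equivIco (1:ℝ) 0).symm_apply_apply x

lemma angFrom_mem (p q : AddCircle (1:ℝ)) : angFrom p q ∈ Set.Ico (0:ℝ) 1 := by
  have := ((AddCircle.equivIco (1:ℝ) 0) (q - p)).2
  simpa [angFrom] using this

lemma coe_angFrom (p q : AddCircle (1:ℝ)) : p + ((angFrom p q : ℝ) : AddCircle (1:ℝ)) = q := by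
  rw [angFrom, coe_equivIco_back]; abel

lemma angFrom_add (p : AddCircle (1:ℝ)) (t : ℝ) (h0 : 0 ≤ t) (h1 : t < 1) :
    angFrom p (p + (t : AddCircle (1:ℝ))) = t := by
  rw [angFrom, add_sub_cancel_left]
  rw [show ((t : ℝ) : AddCircle (1:ℝ)) = QuotientAddGroup.mk t from rfl,
    AddCircle.coe_equivIco_mk_apply]
  simp [Int.fract_eq_self.mpr ⟨h0, h1⟩]

lemma coe_ne_zero_of_Ioo {x : ℝ} (h0 : 0 < x) (h1 : x < 1) :
    ((x : ℝ) : AddCircle (1:ℝ)) ≠ 0 := by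
  intro h
  rw [AddCircle.coe_eq_zero_iff] at h
  obtain ⟨n, hn⟩ := h
  rw [zsmul_eq_mul, mul_one] at hn
  rcases le_or_gt n 0 with h | h
  · have : (n:ℝ) ≤ 0 := by exact_mod_cast h
    linarith
  · have : (1:ℝ) ≤ (n:ℝ) := by exact_mod_cast h
    linarith


/-- In a family of proper arcs, if an arc `u` is clockwise adjacent to an
arc `v`, then every arc `w` of `F` whose right endpoint is encountered after `r(v)` and
before `r(u)` when traversing clockwise from `r(v)` is also clockwise adjacent to `v`. -/
theorem cw_adjacent_between (F : ArcFamily) (hF : F.IsProper)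
    (u v w : CArc) (hu : u ∈ F.arcs) (hv : v ∈ F.arcs) (hw : w ∈ F.arcs)
    (huv : F.CwAdj v u)
    (h1 : 0 < angFrom v.right w.right)
    (h2 : angFrom v.right w.right < angFrom v.right u.right) :
    F.CwAdj v w := by
  set a := angFrom v.right u.right with ha_def
  set b := angFrom v.right w.right with hb_def
  have ha1 : a < 1 := (angFrom_mem v.right u.right).2
  have hb1 : b < 1 := (angFrom_mem v.right w.right).2
  have hur : u.right = v.right + ((a : ℝ) : AddCircle (1:ℝ)) := (coe_angFrom _ _).symm
  have hwr : w.right = v.right + ((b : ℝ) : AddCircle (1:ℝ)) := (coe_angFrom _ _).symm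
  -- v.right ∈ u.pts
  have hmem : v.right ∈ u.pts := (Finset.mem_filter.mp huv.2).2
  obtain ⟨t, ht0, htl, hteq⟩ := hmem
  -- a = u.len - t
  have hkey : u.right = v.right + (((u.len - t : ℝ)) : AddCircle (1:ℝ)) := by
    rw [hteq, CArc.right, AddCircle.coe_sub]
    abel
  have ha_eq : a = u.len - t := by
    rw [ha_def, hkey]
    exact angFrom_add _ _ (by linarith) (by linarith [u.len_lt_one])
  -- w ≠ v
  have hwv : w ≠ v := by
    intro h
    rw [h] at hb_def
    have : b = 0 := by
      rw [hb_def]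
      have := angFrom_add v.right 0 le_rfl one_pos
      simpa using this
    linarith
  rcases le_or_gt b w.len with hble | hbgt
  · -- v.right ∈ w.pts with witness w.len - b
    refine ⟨hwv, Finset.mem_filter.mpr ⟨hw, ?_⟩⟩
    refine ⟨w.len - b, by linarith, by linarith [le_of_lt h1], ?_⟩
    have : w.left + (((w.len - b : ℝ)) : AddCircle (1:ℝ)) = w.right - ((b:ℝ) : AddCircle (1:ℝ)) := by
      rw [CArc.right, AddCircle.coe_sub]; abel
    rw [this, hwr]; abel
  · -- contradiction with properness: w.pts ⊂ u.pts
    exfalso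
    have hwl : w.left = u.left + (((t + b - w.len : ℝ)) : AddCircle (1:ℝ)) := by
      have h1' : w.left = w.right - ((w.len : ℝ) : AddCircle (1:ℝ)) := by
        rw [CArc.right]; abel
      rw [h1', hwr, hteq]
      rw [show ((t + b - w.len : ℝ) : AddCircle (1:ℝ))
          = ((t:ℝ) : AddCircle (1:ℝ)) + ((b:ℝ) : AddCircle (1:ℝ)) - ((w.len:ℝ) : AddCircle (1:ℝ)) by
        rw [← AddCircle.coe_add, ← AddCircle.coe_sub]]
      abel
    have hsub : w.pts ⊂ u.pts := by
      constructor
      · rintro q ⟨s, hs0, hsl, rfl⟩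
        refine ⟨t + b - w.len + s, by linarith, by linarith [ha_eq, h2], ?_⟩
        rw [hwl, AddCircle.coe_add, add_assoc]
      · intro hcon
        have hul : u.left ∈ u.pts := ⟨0, le_rfl, le_of_lt u.len_pos, by simp⟩
        obtain ⟨s, hs0, hsl, hseq⟩ := hcon hul
        rw [hwl, add_assoc, ← AddCircle.coe_add] at hseq
        have hz : ((t + b - w.len + s : ℝ) : AddCircle (1:ℝ)) = 0 := by
          have := hseq
          nth_rewrite 1 [show u.left = u.left + (0 : AddCircle (1:ℝ)) by rw [add_zero]] at this
          exact (add_left_cancel this).symm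
        exact coe_ne_zero_of_Ioo (by linarith) (by linarith [ha_eq, u.len_lt_one]) hz
    exact hF w hw u hu hsub
end
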